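/- Let Θ ⊆ ℝ^p and let F : Θ → (probability measures on ℝ) be a family such that (i) F(θ)({0}) = 0 for all θ ∈ Θ, and (ii) finite mixtures from the family have identifiable parameters: for every m ≥ 1, nonnegative weights (α_i), (α′_i) and parameters (θ_i), (θ′_i), the equality Σ_{i=1}^m α_i F(θ_i) = Σ_{i=1}^m α′_i F(θ′_i) (as measures on ℝ) implies Σ_{i=1}^m α_i δ_{θ_i} = Σ_{i=1}^m α′_i δ_{θ′_i}. Let Q ≥ 1 and consider two parameter sets (π, p, θ) and (π′, p′, θ′) of the parametric weighted random graph mixture model, each satisfying: π_q ∈ (0,1) with Σ_q π_q = 1, symmetric p_{ql} ∈ (0,1], symmetric θ_{ql} ∈ Θ with the Q(Q+1)/2 values (θ_{ql})_{1≤q≤l≤Q} pairwise distinct (and likewise for the primed set). If the two induced distributions of K_3, namely the measures Σ_{q,l,m=1}^Q π_q π_l π_m · μ_{ql} ⊗ μ_{qm} ⊗ μ_{lm} on ℝ³ with μ_{ql} = (1−p_{ql}) δ_0 + p_{ql} F(θ_{ql}), coincide, then there is a permutation σ of {1,…,Q} such that π′_q = π_{σ(q)}, p′_{ql} = p_{σ(q)σ(l)},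 and θ′_{ql} = θ_{σ(q)σ(l)} for all q, l. -/

import Mathlib

open Finset MeasureTheory

private lemma symPairEq {Q : ℕ} {α : Type*} {θ : Fin Q → Fin Q → α}
    (hsym : ∀ q l, θ q l = θ l q)
    (hdist : ∀ q l q' l' : Fin Q, q ≤ l → q' ≤ l' → θ q l = θ q' l' → q = q' ∧ l = l')
    {a b u v : Fin Q} (h : θ a b = θ u v) : (a = u ∧ b = v) ∨ (a = v ∧ b = u) := by
  rcases le_total a b with hab | hab <;> rcases le_total u v with huv | huv
  · exact Or.inl (hdist a b u v hab huv h)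
  · rcases hdist a b v u hab huv (h.trans (hsym u v)) with ⟨h1, h2⟩
    exact Or.inr ⟨h1, h2⟩
  · rcases hdist b a u v hab huv ((hsym b a).trans h) with ⟨h1, h2⟩
    exact Or.inr ⟨h2, h1⟩
  · rcases hdist b a v u hab huv (((hsym b a).trans h).trans (hsym u v)) with ⟨h1, h2⟩
    exact Or.inl ⟨h2, h1⟩

private lemma sum_ite_single1 {Q : ℕ} (f : Fin Q → ENNReal) (P : Fin Q → Prop)
    [DecidablePred P] (l₀ : Fin Q) (h : ∀ l, P l ↔ l = l₀) :
    (∑ l, f l * (if P l then 1 else 0)) = f l₀ := by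
  have he : ∀ l, f l * (if P l then 1 else 0) = if l = l₀ then f l else 0 := by
    intro l; by_cases hP : P l
    · rw [if_pos hP, if_pos ((h l).mp hP), mul_one]
    · rw [if_neg hP, if_neg (fun hc => hP ((h l).mpr hc)), mul_zero]
  simp_rw [he]
  rw [Finset.sum_ite_eq' Finset.univ l₀ f, if_pos (Finset.mem_univ l₀)]

private lemma exists_of_sum_ite_pos1 {Q : ℕ} (f : Fin Q → ENNReal) (P : Fin Q → Prop)
    [DecidablePred P] (h : (∑ l, f l * (if P l then 1 else 0)) ≠ 0) : ∃ l, P l := by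
  by_contra hc
  push_neg at hc
  exact h (Finset.sum_eq_zero fun l _ => by rw [if_neg (hc l), mul_zero])

private lemma sum_ite_single2 {Q : ℕ} (f : Fin Q → Fin Q → ENNReal)
    (P : Fin Q → Fin Q → Prop) [∀ q l, Decidable (P q l)] (q₀ l₀ : Fin Q)
    (h : ∀ q l, P q l ↔ q = q₀ ∧ l = l₀) :
    (∑ q, ∑ l, f q l * (if P q l then 1 else 0)) = f q₀ l₀ := by
  have he : ∀ q l, f q l * (if P q l then 1 else 0) = if q = q₀ ∧ l = l₀ then f q l else 0 := by
    intro q l; by_cases hP : P q l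
    · rw [if_pos hP, if_pos ((h q l).mp hP), mul_one]
    · rw [if_neg hP, if_neg (fun hc => hP ((h q l).mpr hc)), mul_zero]
  simp_rw [he]
  rw [Finset.sum_eq_single q₀]
  · rw [Finset.sum_eq_single l₀]
    · rw [if_pos ⟨rfl, rfl⟩]
    · intro l _ hl; rw [if_neg (fun hc => hl hc.2)]
    · intro hq; exact absurd (Finset.mem_univ l₀) hq
  · intro q _ hq; exact Finset.sum_eq_zero fun l _ => by rw [if_neg (fun hc => hq hc.1)]
  · intro hq; exact absurd (Finset.mem_univ q₀) hq

private lemma sum_ite_pair2 {Q : ℕ} (f : Fin Q → Fin Q → ENNReal)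
    (P : Fin Q → Fin Q → Prop) [∀ q l, Decidable (P q l)] (q₀ l₀ : Fin Q) (hne : q₀ ≠ l₀)
    (h : ∀ q l, P q l ↔ (q = q₀ ∧ l = l₀) ∨ (q = l₀ ∧ l = q₀)) :
    (∑ q, ∑ l, f q l * (if P q l then 1 else 0)) = f q₀ l₀ + f l₀ q₀ := by
  have he : ∀ q l, f q l * (if P q l then 1 else 0)
      = f q l * (if q = q₀ ∧ l = l₀ then 1 else 0) + f q l * (if q = l₀ ∧ l = q₀ then 1 else 0) := by
    intro q l
    by_cases hP : P q l
    · rcases (h q l).mp hP with ⟨h1, h2⟩ | ⟨h1, h2⟩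
      · rw [if_pos hP, if_pos (⟨h1, h2⟩ : q = q₀ ∧ l = l₀),
          if_neg (fun hc : q = l₀ ∧ l = q₀ => hne (h1.symm.trans hc.1)),
          mul_one, mul_zero, add_zero]
      · rw [if_pos hP, if_neg (fun hc : q = q₀ ∧ l = l₀ => hne (hc.1.symm.trans h1)),
          if_pos (⟨h1, h2⟩ : q = l₀ ∧ l = q₀), mul_one, mul_zero, zero_add]
    · rw [if_neg hP, if_neg (fun hc => hP ((h q l).mpr (Or.inl hc))),
        if_neg (fun hc => hP ((h q l).mpr (Or.inr hc))), mul_zero, add_zero]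
  simp_rw [he, Finset.sum_add_distrib]
  rw [sum_ite_single2 f _ q₀ l₀ (fun q l => Iff.rfl), sum_ite_single2 f _ l₀ q₀ (fun q l => Iff.rfl)]

private lemma exists_of_sum_ite_pos2 {Q : ℕ} (f : Fin Q → Fin Q → ENNReal)
    (P : Fin Q → Fin Q → Prop) [∀ q l, Decidable (P q l)]
    (h : (∑ q, ∑ l, f q l * (if P q l then 1 else 0)) ≠ 0) : ∃ q l, P q l := by
  by_contra hc
  push_neg at hc
  exact h (Finset.sum_eq_zero fun q _ => Finset.sum_eq_zero fun l _ => by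
    rw [if_neg (hc q l), mul_zero])

private lemma dirac_sum_apply {pd : ℕ} {ι : Type*} [Fintype ι]
    (c : ι → ENNReal) (τ : ι → (Fin pd → ℝ)) (t : Fin pd → ℝ) :
    (∑ i, c i • Measure.dirac (τ i)) {t} = ∑ i, c i * (if τ i = t then 1 else 0) := by
  classical
  rw [Measure.finset_sum_apply]
  refine Finset.sum_congr rfl fun i _ => ?_
  rw [Measure.smul_apply, Measure.dirac_apply' _ (measurableSet_singleton t), smul_eq_mul]
  congr 1
  by_cases h : τ i = t
  · simp [Set.indicator, h]
  · simp [Set.indicator, h]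

private lemma mixture_ident {pd : ℕ} {Θ : Set (Fin pd → ℝ)} {F : (Fin pd → ℝ) → Measure ℝ}
    (hident : ∀ (m : ℕ) (a a' : Fin m → ℝ) (t t' : Fin m → (Fin pd → ℝ)),
      (∀ i, 0 ≤ a i) → (∀ i, 0 ≤ a' i) → (∀ i, t i ∈ Θ) → (∀ i, t' i ∈ Θ) →
      (∑ i, ENNReal.ofReal (a i) • F (t i) = ∑ i, ENNReal.ofReal (a' i) • F (t' i)) →
      (∑ i, ENNReal.ofReal (a i) • Measure.dirac (t i)
        = ∑ i, ENNReal.ofReal (a' i) • Measure.dirac (t' i)))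
    {ι κ : Type} [Fintype ι] [Fintype κ]
    (w : ι → ℝ) (τ : ι → (Fin pd → ℝ)) (w' : κ → ℝ) (τ' : κ → (Fin pd → ℝ))
    (hw : ∀ i, 0 ≤ w i) (hw' : ∀ j, 0 ≤ w' j)
    (hτ : ∀ i, τ i ∈ Θ) (hτ' : ∀ j, τ' j ∈ Θ)
    (h : ∑ i, ENNReal.ofReal (w i) • F (τ i) = ∑ j, ENNReal.ofReal (w' j) • F (τ' j)) :
    ∑ i, ENNReal.ofReal (w i) • Measure.dirac (τ i)
      = ∑ j, ENNReal.ofReal (w' j) • Measure.dirac (τ' j) := by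
  classical
  set m := Fintype.card ι + Fintype.card κ with hm
  let E : (ι ⊕ κ) ≃ Fin m := ((Fintype.equivFin ι).sumCongr (Fintype.equivFin κ)).trans finSumFinEquiv
  let a : Fin m → ℝ := fun i => Sum.elim w (fun _ => 0) (E.symm i)
  let a' : Fin m → ℝ := fun i => Sum.elim (fun _ => 0) w' (E.symm i)
  let t : Fin m → (Fin pd → ℝ) := fun i => Sum.elim τ τ' (E.symm i)
  have compute1 : ∀ {X : Type} [MeasurableSpace X] (ν : (Fin pd → ℝ) → Measure X),
      (∑ i : Fin m, ENNReal.ofReal (a i) • ν (t i)) = ∑ i : ι, ENNReal.ofReal (w i) • ν (τ i) := by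
    intro X _ ν
    rw [← Equiv.sum_comp E (fun i => ENNReal.ofReal (a i) • ν (t i))]
    simp only [a, t, Equiv.symm_apply_apply]
    rw [Fintype.sum_sum_type]
    simp
  have compute2 : ∀ {X : Type} [MeasurableSpace X] (ν : (Fin pd → ℝ) → Measure X),
      (∑ i : Fin m, ENNReal.ofReal (a' i) • ν (t i)) = ∑ j : κ, ENNReal.ofReal (w' j) • ν (τ' j) := by
    intro X _ ν
    rw [← Equiv.sum_comp E (fun i => ENNReal.ofReal (a' i) • ν (t i))]
    simp only [a', t, Equiv.symm_apply_apply]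
    rw [Fintype.sum_sum_type]
    simp
  have h0 : ∀ i, 0 ≤ a i := by
    intro i; cases hc : E.symm i with
    | inl x => simp [a, hc, hw x]
    | inr x => simp [a, hc]
  have h0' : ∀ i, 0 ≤ a' i := by
    intro i; cases hc : E.symm i with
    | inl x => simp [a', hc]
    | inr x => simp [a', hc, hw' x]
  have hmem : ∀ i, t i ∈ Θ := by
    intro i; cases hc : E.symm i with
    | inl x => simpa [t, hc] using hτ x
    | inr x => simpa [t, hc] using hτ' x
  have hres := hident m a a' t t h0 h0' hmem hmem (by rw [compute1 F, compute2 F]; exact h)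
  rw [compute1 Measure.dirac, compute2 Measure.dirac] at hres
  exact hres

/-- The zero-inflated edge distribution `μ = (1-p)δ₀ + pF` of a weighted random graph
mixture model. -/
noncomputable def edgeMeasure (p : ℝ) (ν : MeasureTheory.Measure ℝ) :
    MeasureTheory.Measure ℝ :=
  ENNReal.ofReal (1 - p) • MeasureTheory.Measure.dirac 0 + ENNReal.ofReal p • ν

/-- Identifiability, up to label swapping, of the parameters of the parametric weighted
random graph mixture model from the distribution of `K₃`, under the assumptions that the
parametric family `F` has no point mass at `0`, has identifiable finite-mixture
parameters, and that the `Q(Q+1)/2` connectivity parameters `θ_{ql}` are pairwise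
distinct. Equality of the distributions of `K₃ = (X₁₂, X₁₃, X₂₃)` (mixture measures on
`ℝ³`) is expressed by equality on all measurable rectangles `A × B × C`. -/
theorem parametric_weighted_identifiable_from_K3
    (pd : ℕ) (Θ : Set (Fin pd → ℝ)) (F : (Fin pd → ℝ) → Measure ℝ)
    (hFprob : ∀ θ ∈ Θ, IsProbabilityMeasure (F θ))
    (hF0 : ∀ θ ∈ Θ, F θ {0} = 0)
    (hident : ∀ (m : ℕ) (a a' : Fin m → ℝ) (t t' : Fin m → (Fin pd → ℝ)),
      (∀ i, 0 ≤ a i) → (∀ i, 0 ≤ a' i) → (∀ i, t i ∈ Θ) → (∀ i, t' i ∈ Θ) →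
      (∑ i, ENNReal.ofReal (a i) • F (t i) = ∑ i, ENNReal.ofReal (a' i) • F (t' i)) →
      (∑ i, ENNReal.ofReal (a i) • Measure.dirac (t i)
        = ∑ i, ENNReal.ofReal (a' i) • Measure.dirac (t' i)))
    (Q : ℕ) (hQ : 1 ≤ Q)
    (π π' : Fin Q → ℝ) (p p' : Fin Q → Fin Q → ℝ)
    (θ θ' : Fin Q → Fin Q → (Fin pd → ℝ))
    (hπ : ∀ q, π q ∈ Set.Ioo (0 : ℝ) 1) (hπ' : ∀ q, π' q ∈ Set.Ioo (0 : ℝ) 1)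
    (hπsum : ∑ q, π q = 1) (hπ'sum : ∑ q, π' q = 1)
    (hp : ∀ q l, p q l ∈ Set.Ioc (0 : ℝ) 1) (hp' : ∀ q l, p' q l ∈ Set.Ioc (0 : ℝ) 1)
    (hpsym : ∀ q l, p q l = p l q) (hp'sym : ∀ q l, p' q l = p' l q)
    (hθΘ : ∀ q l, θ q l ∈ Θ) (hθ'Θ : ∀ q l, θ' q l ∈ Θ)
    (hθsym : ∀ q l, θ q l = θ l q) (hθ'sym : ∀ q l, θ' q l = θ' l q)
    (hθdist : ∀ q l q' l' : Fin Q, q ≤ l → q' ≤ l' →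
      θ q l = θ q' l' → q = q' ∧ l = l')
    (hθ'dist : ∀ q l q' l' : Fin Q, q ≤ l → q' ≤ l' →
      θ' q l = θ' q' l' → q = q' ∧ l = l')
    (heq : ∀ A B C : Set ℝ, MeasurableSet A → MeasurableSet B → MeasurableSet C →
      (∑ q : Fin Q, ∑ l : Fin Q, ∑ r : Fin Q,
        ENNReal.ofReal (π q * π l * π r) *
          (edgeMeasure (p q l) (F (θ q l)) A *
            (edgeMeasure (p q r) (F (θ q r)) B *
              edgeMeasure (p l r) (F (θ l r)) C)))
      = ∑ q : Fin Q, ∑ l : Fin Q, ∑ r : Fin Q,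
        ENNReal.ofReal (π' q * π' l * π' r) *
          (edgeMeasure (p' q l) (F (θ' q l)) A *
            (edgeMeasure (p' q r) (F (θ' q r)) B *
              edgeMeasure (p' l r) (F (θ' l r)) C))) :
    ∃ σ : Equiv.Perm (Fin Q),
      (∀ q, π' q = π (σ q)) ∧
      (∀ q l, p' q l = p (σ q) (σ l)) ∧
      (∀ q l, θ' q l = θ (σ q) (σ l)) := by
  classical
  -- basic edge measure facts
  have edge_univ : ∀ (r : ℝ) (ν : Measure ℝ), 0 ≤ r → r ≤ 1 → ν Set.univ = 1 →
      edgeMeasure r ν Set.univ = 1 := by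
    intro r ν hr hr1 hν
    rw [edgeMeasure, Measure.add_apply, Measure.smul_apply, Measure.smul_apply,
      smul_eq_mul, smul_eq_mul, hν, Measure.dirac_apply_of_mem (Set.mem_univ (0:ℝ)),
      mul_one, mul_one, ← ENNReal.ofReal_add (by linarith) hr, sub_add_cancel,
      ENNReal.ofReal_one]
  have edge_off : ∀ (r : ℝ) (ν : Measure ℝ), ν {0} = 0 → ∀ s : Set ℝ, MeasurableSet s →
      edgeMeasure r ν (s ∩ {0}ᶜ) = ENNReal.ofReal r * ν s := by
    intro r ν hν0 s hs
    have h1 : Measure.dirac (0:ℝ) (s ∩ {0}ᶜ) = 0 := by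
      rw [Measure.dirac_apply' _ (hs.inter (measurableSet_singleton (0:ℝ)).compl)]
      simp [Set.indicator]
    have h2 : ν (s ∩ {0}ᶜ) = ν s := by
      have h3 := measure_inter_add_diff (μ := ν) s (measurableSet_singleton (0:ℝ))
      have h4 : ν (s ∩ {0}) = 0 := measure_mono_null Set.inter_subset_right hν0
      rw [h4, zero_add, Set.diff_eq] at h3
      exact h3
    rw [edgeMeasure, Measure.add_apply, Measure.smul_apply, Measure.smul_apply, h1, h2,
      smul_eq_mul, smul_eq_mul, mul_zero, zero_add]
  set M : Fin Q → Set ℝ → ENNReal :=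
    fun q B => ∑ l, ENNReal.ofReal (π l) * edgeMeasure (p q l) (F (θ q l)) B with hM
  set M' : Fin Q → Set ℝ → ENNReal :=
    fun q B => ∑ l, ENNReal.ofReal (π' l) * edgeMeasure (p' q l) (F (θ' q l)) B with hM'
  have hMuniv : ∀ q, M q Set.univ = 1 := by
    intro q
    simp only [hM]
    rw [Finset.sum_congr rfl (fun l _ => by
      rw [edge_univ _ _ (hp q l).1.le (hp q l).2 (hFprob _ (hθΘ q l)).measure_univ, mul_one]),
      ← ENNReal.ofReal_sum_of_nonneg (fun l _ => (hπ l).1.le), hπsum, ENNReal.ofReal_one]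
  have hM'univ : ∀ q, M' q Set.univ = 1 := by
    intro q
    simp only [hM']
    rw [Finset.sum_congr rfl (fun l _ => by
      rw [edge_univ _ _ (hp' q l).1.le (hp' q l).2 (hFprob _ (hθ'Θ q l)).measure_univ, mul_one]),
      ← ENNReal.ofReal_sum_of_nonneg (fun l _ => (hπ' l).1.le), hπ'sum, ENNReal.ofReal_one]
  have hMne : ∀ q B, M q B ≠ ⊤ := by
    intro q B
    refine ne_top_of_le_ne_top ENNReal.one_ne_top ?_
    rw [← hMuniv q]
    simp only [hM]
    exact Finset.sum_le_sum fun l _ => mul_le_mul_right (measure_mono (Set.subset_univ B)) _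
  have hM'ne : ∀ q B, M' q B ≠ ⊤ := by
    intro q B
    refine ne_top_of_le_ne_top ENNReal.one_ne_top ?_
    rw [← hM'univ q]
    simp only [hM']
    exact Finset.sum_le_sum fun l _ => mul_le_mul_right (measure_mono (Set.subset_univ B)) _
  have hMoff : ∀ q (s : Set ℝ), MeasurableSet s →
      M q (s ∩ {0}ᶜ) = ∑ l, ENNReal.ofReal (π l) *
        (ENNReal.ofReal (p q l) * F (θ q l) s) := by
    intro q s hs
    simp only [hM]
    exact Finset.sum_congr rfl fun l _ => by rw [edge_off _ _ (hF0 _ (hθΘ q l)) s hs]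
  have hM'off : ∀ q (s : Set ℝ), MeasurableSet s →
      M' q (s ∩ {0}ᶜ) = ∑ l, ENNReal.ofReal (π' l) *
        (ENNReal.ofReal (p' q l) * F (θ' q l) s) := by
    intro q s hs
    simp only [hM']
    exact Finset.sum_congr rfl fun l _ => by rw [edge_off _ _ (hF0 _ (hθ'Θ q l)) s hs]
  -- the two-edge marginal equality
  have key2 : ∀ A B : Set ℝ, MeasurableSet A → MeasurableSet B →
      (∑ q, ENNReal.ofReal (π q) * (M q A * M q B))
        = ∑ q, ENNReal.ofReal (π' q) * (M' q A * M' q B) := by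
    intro A B hA hB
    have expand : ∀ (g : Fin Q → ℝ), (∀ q, 0 ≤ g q) → ∀ (pp : Fin Q → Fin Q → ℝ)
        (tt : Fin Q → Fin Q → (Fin pd → ℝ)),
        (∀ q l, edgeMeasure (pp q l) (F (tt q l)) Set.univ = 1) →
        (∑ q, ∑ l, ∑ r, ENNReal.ofReal (g q * g l * g r) *
            (edgeMeasure (pp q l) (F (tt q l)) A *
              (edgeMeasure (pp q r) (F (tt q r)) B *
                edgeMeasure (pp l r) (F (tt l r)) Set.univ)))
          = ∑ q, ENNReal.ofReal (g q) *
              ((∑ l, ENNReal.ofReal (g l) * edgeMeasure (pp q l) (F (tt q l)) A) *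
               (∑ r, ENNReal.ofReal (g r) * edgeMeasure (pp q r) (F (tt q r)) B)) := by
      intro g hg pp tt hm
      refine Finset.sum_congr rfl fun q _ => ?_
      rw [Finset.sum_mul_sum, Finset.mul_sum]
      refine Finset.sum_congr rfl fun l _ => ?_
      rw [Finset.mul_sum]
      refine Finset.sum_congr rfl fun r _ => ?_
      rw [hm l r, mul_one, ENNReal.ofReal_mul (mul_nonneg (hg q) (hg l)),
        ENNReal.ofReal_mul (hg q)]
      ring
    have h := heq A B Set.univ hA hB MeasurableSet.univ
    rw [expand π (fun q => (hπ q).1.le) p θ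
        (fun q l => edge_univ _ _ (hp q l).1.le (hp q l).2 (hFprob _ (hθΘ q l)).measure_univ),
      expand π' (fun q => (hπ' q).1.le) p' θ'
        (fun q l => edge_univ _ _ (hp' q l).1.le (hp' q l).2 (hFprob _ (hθ'Θ q l)).measure_univ)] at h
    simpa only [hM, hM'] using h
  -- the key identity obtained from mixture identifiability
  have hkey : ∀ B : Set ℝ, MeasurableSet B → ∀ t : Fin pd → ℝ,
      (∑ q, ∑ l, (ENNReal.ofReal (π q) * M q B * ENNReal.ofReal (π l * p q l)) *
          (if θ q l = t then 1 else 0))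
        = ∑ q, ∑ l, (ENNReal.ofReal (π' q) * M' q B * ENNReal.ofReal (π' l * p' q l)) *
          (if θ' q l = t then 1 else 0) := by
    intro B hB t
    have measeq : (∑ x : Fin Q × Fin Q,
          ENNReal.ofReal (π x.1 * (M x.1 B).toReal * (π x.2 * p x.1 x.2)) • F (θ x.1 x.2))
        = ∑ x : Fin Q × Fin Q,
          ENNReal.ofReal (π' x.1 * (M' x.1 B).toReal * (π' x.2 * p' x.1 x.2)) • F (θ' x.1 x.2) := by
      refine Measure.ext fun s hs => ?_
      rw [Measure.finset_sum_apply, Measure.finset_sum_apply]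
      have hL : ∀ (x : Fin Q × Fin Q),
          (ENNReal.ofReal (π x.1 * (M x.1 B).toReal * (π x.2 * p x.1 x.2)) • F (θ x.1 x.2)) s
            = ENNReal.ofReal (π x.1) *
              ((ENNReal.ofReal (π x.2) * (ENNReal.ofReal (p x.1 x.2) * F (θ x.1 x.2) s)) * M x.1 B) := by
        intro x
        rw [Measure.smul_apply, smul_eq_mul,
          ENNReal.ofReal_mul (mul_nonneg (hπ x.1).1.le ENNReal.toReal_nonneg),
          ENNReal.ofReal_mul (hπ x.1).1.le,
          ENNReal.ofReal_mul (hπ x.2).1.le,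
          ENNReal.ofReal_toReal (hMne x.1 B)]
        ring
      have hL' : ∀ (x : Fin Q × Fin Q),
          (ENNReal.ofReal (π' x.1 * (M' x.1 B).toReal * (π' x.2 * p' x.1 x.2)) • F (θ' x.1 x.2)) s
            = ENNReal.ofReal (π' x.1) *
              ((ENNReal.ofReal (π' x.2) * (ENNReal.ofReal (p' x.1 x.2) * F (θ' x.1 x.2) s)) * M' x.1 B) := by
        intro x
        rw [Measure.smul_apply, smul_eq_mul,
          ENNReal.ofReal_mul (mul_nonneg (hπ' x.1).1.le ENNReal.toReal_nonneg),
          ENNReal.ofReal_mul (hπ' x.1).1.le,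
          ENNReal.ofReal_mul (hπ' x.2).1.le,
          ENNReal.ofReal_toReal (hM'ne x.1 B)]
        ring
      rw [Finset.sum_congr rfl (fun x _ => hL x), Finset.sum_congr rfl (fun x _ => hL' x),
        Fintype.sum_prod_type, Fintype.sum_prod_type]
      have hms : MeasurableSet (s ∩ {0}ᶜ) := hs.inter (measurableSet_singleton (0:ℝ)).compl
      have collL : ∀ q : Fin Q, (∑ l, ENNReal.ofReal (π q) *
            ((ENNReal.ofReal (π l) * (ENNReal.ofReal (p q l) * F (θ q l) s)) * M q B))
          = ENNReal.ofReal (π q) * (M q (s ∩ {0}ᶜ) * M q B) := by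
        intro q
        rw [hMoff q s hs, Finset.sum_mul, Finset.mul_sum]
      have collL' : ∀ q : Fin Q, (∑ l, ENNReal.ofReal (π' q) *
            ((ENNReal.ofReal (π' l) * (ENNReal.ofReal (p' q l) * F (θ' q l) s)) * M' q B))
          = ENNReal.ofReal (π' q) * (M' q (s ∩ {0}ᶜ) * M' q B) := by
        intro q
        rw [hM'off q s hs, Finset.sum_mul, Finset.mul_sum]
      rw [Finset.sum_congr rfl (fun q _ => collL q), Finset.sum_congr rfl (fun q _ => collL' q)]
      exact key2 (s ∩ {0}ᶜ) B hms hB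
    have hmix := mixture_ident hident
      (w := fun x : Fin Q × Fin Q => π x.1 * (M x.1 B).toReal * (π x.2 * p x.1 x.2))
      (τ := fun x : Fin Q × Fin Q => θ x.1 x.2)
      (w' := fun x : Fin Q × Fin Q => π' x.1 * (M' x.1 B).toReal * (π' x.2 * p' x.1 x.2))
      (τ' := fun x : Fin Q × Fin Q => θ' x.1 x.2)
      (fun x => mul_nonneg (mul_nonneg (hπ x.1).1.le ENNReal.toReal_nonneg)
        (mul_nonneg (hπ x.2).1.le (hp x.1 x.2).1.le))
      (fun x => mul_nonneg (mul_nonneg (hπ' x.1).1.le ENNReal.toReal_nonneg)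
        (mul_nonneg (hπ' x.2).1.le (hp' x.1 x.2).1.le))
      (fun x => hθΘ x.1 x.2) (fun x => hθ'Θ x.1 x.2) measeq
    have hev : (∑ x : Fin Q × Fin Q,
          ENNReal.ofReal (π x.1 * (M x.1 B).toReal * (π x.2 * p x.1 x.2)) •
            Measure.dirac (θ x.1 x.2)) {t}
        = (∑ x : Fin Q × Fin Q,
          ENNReal.ofReal (π' x.1 * (M' x.1 B).toReal * (π' x.2 * p' x.1 x.2)) •
            Measure.dirac (θ' x.1 x.2)) {t} := by rw [hmix]
    rw [dirac_sum_apply, dirac_sum_apply, Fintype.sum_prod_type, Fintype.sum_prod_type] at hev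
    have convL : ∀ q l : Fin Q, ENNReal.ofReal (π q * (M q B).toReal * (π l * p q l))
        = ENNReal.ofReal (π q) * M q B * ENNReal.ofReal (π l * p q l) := by
      intro q l
      rw [ENNReal.ofReal_mul (mul_nonneg (hπ q).1.le ENNReal.toReal_nonneg),
        ENNReal.ofReal_mul (hπ q).1.le, ENNReal.ofReal_toReal (hMne q B)]
    have convL' : ∀ q l : Fin Q, ENNReal.ofReal (π' q * (M' q B).toReal * (π' l * p' q l))
        = ENNReal.ofReal (π' q) * M' q B * ENNReal.ofReal (π' l * p' q l) := by
      intro q l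
      rw [ENNReal.ofReal_mul (mul_nonneg (hπ' q).1.le ENNReal.toReal_nonneg),
        ENNReal.ofReal_mul (hπ' q).1.le, ENNReal.ofReal_toReal (hM'ne q B)]
    refine Eq.trans ?_ (hev.trans ?_)
    · refine Finset.sum_congr rfl fun q _ => Finset.sum_congr rfl fun l _ => ?_
      exact congrArg (fun z => z * (if θ q l = t then 1 else 0)) (convL q l).symm
    · refine Finset.sum_congr rfl fun q _ => Finset.sum_congr rfl fun l _ => ?_
      exact congrArg (fun z => z * (if θ' q l = t then 1 else 0)) (convL' q l)
  -- matching of the diagonal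
  have main : ∀ q₀ : Fin Q, ∃ a : Fin Q, θ a a = θ' q₀ q₀ ∧
      (∀ B : Set ℝ, MeasurableSet B → M' q₀ B = M a B) ∧
      π a * (π a * p a a) = π' q₀ * (π' q₀ * p' q₀ q₀) := by
    intro q₀
    have hiff' : ∀ q l, θ' q l = θ' q₀ q₀ ↔ (q = q₀ ∧ l = q₀) := by
      intro q l
      constructor
      · intro h
        rcases symPairEq hθ'sym hθ'dist h with ⟨h1, h2⟩ | ⟨h1, h2⟩ <;> exact ⟨h1, h2⟩
      · rintro ⟨rfl, rfl⟩; rfl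
    have hdag := (hkey Set.univ MeasurableSet.univ (θ' q₀ q₀)).trans
      (sum_ite_single2
        (fun q l => ENNReal.ofReal (π' q) * M' q Set.univ * ENNReal.ofReal (π' l * p' q l))
        (fun q l => θ' q l = θ' q₀ q₀) q₀ q₀ hiff')
    have hcoefpos : ENNReal.ofReal (π' q₀) * M' q₀ Set.univ *
        ENNReal.ofReal (π' q₀ * p' q₀ q₀) ≠ 0 := by
      rw [hM'univ q₀, mul_one]
      exact mul_ne_zero (ne_of_gt (ENNReal.ofReal_pos.mpr (hπ' q₀).1))
        (ne_of_gt (ENNReal.ofReal_pos.mpr (mul_pos (hπ' q₀).1 (hp' q₀ q₀).1)))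
    obtain ⟨a, b, hab⟩ := exists_of_sum_ite_pos2 _ _ (by rw [hdag]; exact hcoefpos)
    have hsetiff : ∀ q l, θ q l = θ' q₀ q₀ ↔ ((q = a ∧ l = b) ∨ (q = b ∧ l = a)) := by
      intro q l
      constructor
      · intro h
        exact symPairEq hθsym hθdist (h.trans hab.symm)
      · intro h
        rcases h with ⟨h1, h2⟩ | ⟨h1, h2⟩
        · rw [h1, h2]; exact hab
        · rw [h1, h2]; exact (hθsym b a).trans hab
    by_cases hcase : a = b
    · subst hcase
      have hsing : ∀ q l, θ q l = θ' q₀ q₀ ↔ (q = a ∧ l = a) := by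
        intro q l; rw [hsetiff q l, or_self]
      have hdagL := sum_ite_single2
        (fun q l => ENNReal.ofReal (π q) * M q Set.univ * ENNReal.ofReal (π l * p q l))
        (fun q l => θ q l = θ' q₀ q₀) a a hsing
      have hcoef : ENNReal.ofReal (π a) * ENNReal.ofReal (π a * p a a)
          = ENNReal.ofReal (π' q₀) * ENNReal.ofReal (π' q₀ * p' q₀ q₀) := by
        have h := hdagL.symm.trans hdag
        beta_reduce at h
        rwa [hMuniv a, hM'univ q₀, mul_one, mul_one] at h
      have hc0 : (ENNReal.ofReal (π a) * ENNReal.ofReal (π a * p a a)) ≠ 0 :=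
        mul_ne_zero (ne_of_gt (ENNReal.ofReal_pos.mpr (hπ a).1))
          (ne_of_gt (ENNReal.ofReal_pos.mpr (mul_pos (hπ a).1 (hp a a).1)))
      have hcT : (ENNReal.ofReal (π a) * ENNReal.ofReal (π a * p a a)) ≠ ⊤ :=
        ENNReal.mul_ne_top ENNReal.ofReal_ne_top ENNReal.ofReal_ne_top
      have hMeq : ∀ B : Set ℝ, MeasurableSet B → M' q₀ B = M a B := by
        intro B hB
        have hL := sum_ite_single2
          (fun q l => ENNReal.ofReal (π q) * M q B * ENNReal.ofReal (π l * p q l))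
          (fun q l => θ q l = θ' q₀ q₀) a a hsing
        have hR := sum_ite_single2
          (fun q l => ENNReal.ofReal (π' q) * M' q B * ENNReal.ofReal (π' l * p' q l))
          (fun q l => θ' q l = θ' q₀ q₀) q₀ q₀ hiff'
        have h := (hL.symm.trans (hkey B hB (θ' q₀ q₀))).trans hR
        have h2 : (ENNReal.ofReal (π a) * ENNReal.ofReal (π a * p a a)) * M a B
            = (ENNReal.ofReal (π a) * ENNReal.ofReal (π a * p a a)) * M' q₀ B := by
          calc (ENNReal.ofReal (π a) * ENNReal.ofReal (π a * p a a)) * M a B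
              = ENNReal.ofReal (π a) * M a B * ENNReal.ofReal (π a * p a a) := by ring
            _ = ENNReal.ofReal (π' q₀) * M' q₀ B * ENNReal.ofReal (π' q₀ * p' q₀ q₀) := h
            _ = (ENNReal.ofReal (π' q₀) * ENNReal.ofReal (π' q₀ * p' q₀ q₀)) * M' q₀ B := by
                ring
            _ = (ENNReal.ofReal (π a) * ENNReal.ofReal (π a * p a a)) * M' q₀ B := by
                rw [hcoef]
        exact ((ENNReal.mul_right_inj hc0 hcT).mp h2).symm
      refine ⟨a, hab, hMeq, ?_⟩
      have h3 := hcoef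
      rw [← ENNReal.ofReal_mul (hπ a).1.le, ← ENNReal.ofReal_mul (hπ' q₀).1.le] at h3
      exact (ENNReal.ofReal_eq_ofReal_iff
        (mul_nonneg (hπ a).1.le (mul_nonneg (hπ a).1.le (hp a a).1.le))
        (mul_nonneg (hπ' q₀).1.le (mul_nonneg (hπ' q₀).1.le (hp' q₀ q₀).1.le))).mp h3
    · exfalso
      have hpairU := sum_ite_pair2
        (fun q l => ENNReal.ofReal (π q) * M q Set.univ * ENNReal.ofReal (π l * p q l))
        (fun q l => θ q l = θ' q₀ q₀) a b hcase hsetiff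
      have hd : ENNReal.ofReal (π b) * ENNReal.ofReal (π a * p b a)
          = ENNReal.ofReal (π a) * ENNReal.ofReal (π b * p a b) := by
        rw [← ENNReal.ofReal_mul (hπ b).1.le, ← ENNReal.ofReal_mul (hπ a).1.le]
        congr 1
        rw [hpsym b a]; ring
      have hdag2 : ENNReal.ofReal (π a) * ENNReal.ofReal (π b * p a b)
          + ENNReal.ofReal (π a) * ENNReal.ofReal (π b * p a b)
          = ENNReal.ofReal (π' q₀) * ENNReal.ofReal (π' q₀ * p' q₀ q₀) := by
        have h := hpairU.symm.trans hdag
        beta_reduce at h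
        rwa [hMuniv a, hMuniv b, hM'univ q₀, mul_one, mul_one, mul_one, hd] at h
      have hc0 : ENNReal.ofReal (π a) * ENNReal.ofReal (π b * p a b) ≠ 0 :=
        mul_ne_zero (ne_of_gt (ENNReal.ofReal_pos.mpr (hπ a).1))
          (ne_of_gt (ENNReal.ofReal_pos.mpr (mul_pos (hπ b).1 (hp a b).1)))
      have hcT : ENNReal.ofReal (π a) * ENNReal.ofReal (π b * p a b) ≠ ⊤ :=
        ENNReal.mul_ne_top ENNReal.ofReal_ne_top ENNReal.ofReal_ne_top
      have hstar : ∀ B : Set ℝ, MeasurableSet B → M a B + M b B = M' q₀ B + M' q₀ B := by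
        intro B hB
        have hL := sum_ite_pair2
          (fun q l => ENNReal.ofReal (π q) * M q B * ENNReal.ofReal (π l * p q l))
          (fun q l => θ q l = θ' q₀ q₀) a b hcase hsetiff
        have hR := sum_ite_single2
          (fun q l => ENNReal.ofReal (π' q) * M' q B * ENNReal.ofReal (π' l * p' q l))
          (fun q l => θ' q l = θ' q₀ q₀) q₀ q₀ hiff'
        have h := (hL.symm.trans (hkey B hB (θ' q₀ q₀))).trans hR
        beta_reduce at h
        have h2 : (ENNReal.ofReal (π a) * ENNReal.ofReal (π b * p a b)) * (M a B + M b B)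
            = (ENNReal.ofReal (π a) * ENNReal.ofReal (π b * p a b)) * (M' q₀ B + M' q₀ B) := by
          calc (ENNReal.ofReal (π a) * ENNReal.ofReal (π b * p a b)) * (M a B + M b B)
              = ENNReal.ofReal (π a) * M a B * ENNReal.ofReal (π b * p a b)
                + (ENNReal.ofReal (π a) * ENNReal.ofReal (π b * p a b)) * M b B := by ring
            _ = ENNReal.ofReal (π a) * M a B * ENNReal.ofReal (π b * p a b)
                + ENNReal.ofReal (π b) * M b B * ENNReal.ofReal (π a * p b a) := by
                rw [← hd]; ring
            _ = ENNReal.ofReal (π' q₀) * M' q₀ B * ENNReal.ofReal (π' q₀ * p' q₀ q₀) := h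
            _ = (ENNReal.ofReal (π' q₀) * ENNReal.ofReal (π' q₀ * p' q₀ q₀)) * M' q₀ B := by
                ring
            _ = (ENNReal.ofReal (π a) * ENNReal.ofReal (π b * p a b)
                + ENNReal.ofReal (π a) * ENNReal.ofReal (π b * p a b)) * M' q₀ B := by
                rw [hdag2]
            _ = (ENNReal.ofReal (π a) * ENNReal.ofReal (π b * p a b)) * (M' q₀ B + M' q₀ B) := by
                ring
        exact (ENNReal.mul_right_inj hc0 hcT).mp h2
      have hdirac := mixture_ident hident
        (w := Sum.elim (fun l => π l * p a l) (fun l => π l * p b l))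
        (τ := Sum.elim (fun l => θ a l) (fun l => θ b l))
        (w' := Sum.elim (fun l => π' l * p' q₀ l) (fun l => π' l * p' q₀ l))
        (τ' := Sum.elim (fun l => θ' q₀ l) (fun l => θ' q₀ l))
        (by rintro (l | l) <;> exact mul_nonneg (hπ l).1.le (hp _ l).1.le)
        (by rintro (l | l) <;> exact mul_nonneg (hπ' l).1.le (hp' q₀ l).1.le)
        (by rintro (l | l) <;> [exact hθΘ a l; exact hθΘ b l])
        (by rintro (l | l) <;> exact hθ'Θ q₀ l)
        (by
          refine Measure.ext fun s hs => ?_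
          rw [Measure.finset_sum_apply, Measure.finset_sum_apply,
            Fintype.sum_sum_type, Fintype.sum_sum_type]
          simp only [Sum.elim_inl, Sum.elim_inr]
          have conv1 : ∀ l : Fin Q, (ENNReal.ofReal (π l * p a l) • F (θ a l)) s
              = ENNReal.ofReal (π l) * (ENNReal.ofReal (p a l) * F (θ a l) s) := fun l => by
            rw [Measure.smul_apply, smul_eq_mul, ENNReal.ofReal_mul (hπ l).1.le, mul_assoc]
          have conv2 : ∀ l : Fin Q, (ENNReal.ofReal (π l * p b l) • F (θ b l)) s
              = ENNReal.ofReal (π l) * (ENNReal.ofReal (p b l) * F (θ b l) s) := fun l => by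
            rw [Measure.smul_apply, smul_eq_mul, ENNReal.ofReal_mul (hπ l).1.le, mul_assoc]
          have conv3 : ∀ l : Fin Q, (ENNReal.ofReal (π' l * p' q₀ l) • F (θ' q₀ l)) s
              = ENNReal.ofReal (π' l) * (ENNReal.ofReal (p' q₀ l) * F (θ' q₀ l) s) := fun l => by
            rw [Measure.smul_apply, smul_eq_mul, ENNReal.ofReal_mul (hπ' l).1.le, mul_assoc]
          rw [Finset.sum_congr rfl (fun l _ => conv1 l), Finset.sum_congr rfl (fun l _ => conv2 l),
            Finset.sum_congr rfl (fun l _ => conv3 l), ← hMoff a s hs, ← hMoff b s hs,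
            ← hM'off q₀ s hs]
          exact hstar (s ∩ {0}ᶜ) (hs.inter (measurableSet_singleton (0:ℝ)).compl))
      have heval : ∀ t : Fin pd → ℝ,
          (∑ l, ENNReal.ofReal (π l * p a l) * (if θ a l = t then 1 else 0))
            + (∑ l, ENNReal.ofReal (π l * p b l) * (if θ b l = t then 1 else 0))
          = (∑ l, ENNReal.ofReal (π' l * p' q₀ l) * (if θ' q₀ l = t then 1 else 0))
            + (∑ l, ENNReal.ofReal (π' l * p' q₀ l) * (if θ' q₀ l = t then 1 else 0)) := by
        intro t
        have h2 : (∑ i : Fin Q ⊕ Fin Q,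
              ENNReal.ofReal (Sum.elim (fun l => π l * p a l) (fun l => π l * p b l) i) •
                Measure.dirac (Sum.elim (fun l => θ a l) (fun l => θ b l) i)) {t}
            = (∑ i : Fin Q ⊕ Fin Q,
              ENNReal.ofReal (Sum.elim (fun l => π' l * p' q₀ l) (fun l => π' l * p' q₀ l) i) •
                Measure.dirac (Sum.elim (fun l => θ' q₀ l) (fun l => θ' q₀ l) i)) {t} := by
          rw [hdirac]
        rw [dirac_sum_apply, dirac_sum_apply, Fintype.sum_sum_type, Fintype.sum_sum_type] at h2
        simp only [Sum.elim_inl, Sum.elim_inr] at h2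
        exact h2
      have hfa : ∀ l : Fin Q, ∃ l', θ' q₀ l' = θ a l := by
        intro l
        have h := heval (θ a l)
        have hterm : ENNReal.ofReal (π l * p a l)
            ≤ ∑ l', ENNReal.ofReal (π l' * p a l') * (if θ a l' = θ a l then 1 else 0) := by
          have h1 := Finset.single_le_sum
            (f := fun l' => ENNReal.ofReal (π l' * p a l') * (if θ a l' = θ a l then 1 else 0))
            (fun i _ => zero_le) (Finset.mem_univ l)
          simpa using h1
        by_contra hno
        push_neg at hno
        have hz : (∑ l', ENNReal.ofReal (π' l' * p' q₀ l') *
            (if θ' q₀ l' = θ a l then 1 else 0)) = 0 :=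
          Finset.sum_eq_zero fun l' _ => by rw [if_neg (hno l'), mul_zero]
        rw [hz, add_zero] at h
        have h1 : (∑ l', ENNReal.ofReal (π l' * p a l') *
            (if θ a l' = θ a l then 1 else 0)) = 0 := (add_eq_zero.mp h).1
        rw [h1] at hterm
        exact absurd (le_antisymm hterm (zero_le))
          (ne_of_gt (ENNReal.ofReal_pos.mpr (mul_pos (hπ l).1 (hp a l).1)))
      have hfb : ∀ l : Fin Q, ∃ l', θ' q₀ l' = θ b l := by
        intro l
        have h := heval (θ b l)
        have hterm : ENNReal.ofReal (π l * p b l)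
            ≤ ∑ l', ENNReal.ofReal (π l' * p b l') * (if θ b l' = θ b l then 1 else 0) := by
          have h1 := Finset.single_le_sum
            (f := fun l' => ENNReal.ofReal (π l' * p b l') * (if θ b l' = θ b l then 1 else 0))
            (fun i _ => zero_le) (Finset.mem_univ l)
          simpa using h1
        by_contra hno
        push_neg at hno
        have hz : (∑ l', ENNReal.ofReal (π' l' * p' q₀ l') *
            (if θ' q₀ l' = θ b l then 1 else 0)) = 0 :=
          Finset.sum_eq_zero fun l' _ => by rw [if_neg (hno l'), mul_zero]
        rw [hz, add_zero] at h
        have h1 : (∑ l', ENNReal.ofReal (π l' * p b l') *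
            (if θ b l' = θ b l then 1 else 0)) = 0 := (add_eq_zero.mp h).2
        rw [h1] at hterm
        exact absurd (le_antisymm hterm (zero_le))
          (ne_of_gt (ENNReal.ofReal_pos.mpr (mul_pos (hπ l).1 (hp b l).1)))
      choose fa hfa' using hfa
      choose fb hfb' using hfb
      have hfainj : Function.Injective fa := by
        intro l₁ l₂ h
        have h3 : θ a l₁ = θ a l₂ := by rw [← hfa' l₁, ← hfa' l₂, h]
        rcases symPairEq hθsym hθdist h3 with ⟨-, h2⟩ | ⟨h1, h2⟩
        · exact h2
        · rw [h2, h1]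
      have hfbinj : Function.Injective fb := by
        intro l₁ l₂ h
        have h3 : θ b l₁ = θ b l₂ := by rw [← hfb' l₁, ← hfb' l₂, h]
        rcases symPairEq hθsym hθdist h3 with ⟨-, h2⟩ | ⟨h1, h2⟩
        · exact h2
        · rw [h2, h1]
      obtain ⟨l₁, hl₁⟩ := (Finite.injective_iff_bijective.mp hfainj).2 a
      obtain ⟨l₂, hl₂⟩ := (Finite.injective_iff_bijective.mp hfbinj).2 a
      have e1 := hfa' l₁
      rw [hl₁] at e1
      have e2 := hfb' l₂
      rw [hl₂] at e2
      have e12 : θ a l₁ = θ b l₂ := e1.symm.trans e2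
      have h12 : l₁ = b := by
        rcases symPairEq hθsym hθdist e12 with ⟨h1, -⟩ | ⟨-, h2⟩
        · exact absurd h1 hcase
        · exact h2
      rw [h12] at e1
      obtain ⟨l₃, hl₃⟩ := (Finite.injective_iff_bijective.mp hfainj).2 b
      obtain ⟨l₄, hl₄⟩ := (Finite.injective_iff_bijective.mp hfbinj).2 b
      have e1' := hfa' l₃
      rw [hl₃] at e1'
      have e2' := hfb' l₄
      rw [hl₄] at e2'
      have e12' : θ a l₃ = θ b l₄ := e1'.symm.trans e2'
      have h34 : l₃ = b := by
        rcases symPairEq hθsym hθdist e12' with ⟨h1, -⟩ | ⟨-, h2⟩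
        · exact absurd h1 hcase
        · exact h2
      rw [h34] at e1'
      have e4 : θ' q₀ a = θ' q₀ b := e1.trans e1'.symm
      refine hcase ?_
      rcases symPairEq hθ'sym hθ'dist e4 with ⟨-, h5⟩ | ⟨h5, h6⟩
      · exact h5
      · exact h6.trans h5
  -- the candidate permutation
  choose g hg1 hg2 hg3 using main
  have ginj : Function.Injective g := by
    intro q₁ q₂ h
    have : θ' q₁ q₁ = θ' q₂ q₂ := by rw [← hg1 q₁, ← hg1 q₂, h]
    rcases symPairEq hθ'sym hθ'dist this with ⟨h1, _⟩ | ⟨h1, _⟩ <;> exact h1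
  -- row dirac identity
  have hrow : ∀ q l : Fin Q, ∃ r : Fin Q, θ (g q) r = θ' q l ∧
      π' l * p' q l = π r * p (g q) r := by
    intro q l
    have hdirac := mixture_ident hident
      (w := fun l' => π' l' * p' q l') (τ := fun l' => θ' q l')
      (w' := fun r => π r * p (g q) r) (τ' := fun r => θ (g q) r)
      (fun l' => mul_nonneg (hπ' l').1.le (hp' q l').1.le)
      (fun r => mul_nonneg (hπ r).1.le (hp (g q) r).1.le)
      (fun l' => hθ'Θ q l') (fun r => hθΘ (g q) r)
      (by
        refine Measure.ext fun s hs => ?_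
        rw [Measure.finset_sum_apply, Measure.finset_sum_apply]
        have hcompL : ∀ l' : Fin Q, (ENNReal.ofReal (π' l' * p' q l') • F (θ' q l')) s
            = ENNReal.ofReal (π' l') * (ENNReal.ofReal (p' q l') * F (θ' q l') s) := by
          intro l'
          rw [Measure.smul_apply, smul_eq_mul, ENNReal.ofReal_mul (hπ' l').1.le, mul_assoc]
        have hcompR : ∀ r : Fin Q, (ENNReal.ofReal (π r * p (g q) r) • F (θ (g q) r)) s
            = ENNReal.ofReal (π r) * (ENNReal.ofReal (p (g q) r) * F (θ (g q) r) s) := by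
          intro r
          rw [Measure.smul_apply, smul_eq_mul, ENNReal.ofReal_mul (hπ r).1.le, mul_assoc]
        rw [Finset.sum_congr rfl (fun l' _ => hcompL l'),
          Finset.sum_congr rfl (fun r _ => hcompR r), ← hM'off q s hs, ← hMoff (g q) s hs]
        exact hg2 q (s ∩ {0}ᶜ) (hs.inter (measurableSet_singleton (0:ℝ)).compl))
    have hev : (∑ l', ENNReal.ofReal (π' l' * p' q l') * (if θ' q l' = θ' q l then 1 else 0))
        = ∑ r, ENNReal.ofReal (π r * p (g q) r) * (if θ (g q) r = θ' q l then 1 else 0) := by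
      have h2 : (∑ l', ENNReal.ofReal (π' l' * p' q l') • Measure.dirac (θ' q l')) {θ' q l}
          = (∑ r, ENNReal.ofReal (π r * p (g q) r) • Measure.dirac (θ (g q) r)) {θ' q l} := by
        rw [hdirac]
      rwa [dirac_sum_apply, dirac_sum_apply] at h2
    have hiffL : ∀ l', θ' q l' = θ' q l ↔ l' = l := by
      intro l'
      constructor
      · intro h
        rcases symPairEq hθ'sym hθ'dist h with ⟨-, h2⟩ | ⟨h1, h2⟩
        · exact h2
        · rw [h2, h1]
      · rintro rfl; rfl
    rw [sum_ite_single1 (fun l' => ENNReal.ofReal (π' l' * p' q l'))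
      (fun l' => θ' q l' = θ' q l) l hiffL] at hev
    have hne : (∑ r, ENNReal.ofReal (π r * p (g q) r) *
        (if θ (g q) r = θ' q l then 1 else 0)) ≠ 0 := by
      rw [← hev]
      exact ne_of_gt (ENNReal.ofReal_pos.mpr (mul_pos (hπ' l).1 (hp' q l).1))
    obtain ⟨r, hr⟩ := exists_of_sum_ite_pos1 _ _ hne
    refine ⟨r, hr, ?_⟩
    have hiffR : ∀ r', θ (g q) r' = θ' q l ↔ r' = r := by
      intro r'
      constructor
      · intro h
        have h3 : θ (g q) r' = θ (g q) r := h.trans hr.symm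
        rcases symPairEq hθsym hθdist h3 with ⟨-, h2⟩ | ⟨h1, h2⟩
        · exact h2
        · rw [h2, h1]
      · rintro rfl; exact hr
    rw [sum_ite_single1 (fun r' => ENNReal.ofReal (π r' * p (g q) r'))
      (fun r' => θ (g q) r' = θ' q l) r hiffR] at hev
    exact (ENNReal.ofReal_eq_ofReal_iff (mul_nonneg (hπ' l).1.le (hp' q l).1.le)
      (mul_nonneg (hπ r).1.le (hp (g q) r).1.le)).mp hev
  -- the parameter identities
  have hθfinal : ∀ q l, θ' q l = θ (g q) (g l) := by
    intro q l
    by_cases hql : q = l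
    · subst hql; exact (hg1 q).symm
    · obtain ⟨r₁, hr₁, _⟩ := hrow q l
      obtain ⟨r₂, hr₂, _⟩ := hrow l q
      have h12 : θ (g q) r₁ = θ (g l) r₂ := by
        rw [hr₁, hr₂, hθ'sym]
      rcases symPairEq hθsym hθdist h12 with ⟨h1, _⟩ | ⟨h1, h2⟩
      · exact absurd (ginj h1) hql
      · rw [← hr₁, h2]
  have hwfinal : ∀ q l, π' l * p' q l = π (g l) * p (g q) (g l) := by
    intro q l
    by_cases hql : q = l
    · subst hql
      obtain ⟨r, hr, hw⟩ := hrow q q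
      have : θ (g q) r = θ (g q) (g q) := by rw [hr, ← hg1 q]
      rcases symPairEq hθsym hθdist this with ⟨-, h2⟩ | ⟨-, h2⟩ <;> rw [hw, h2]
    · obtain ⟨r₁, hr₁, hw₁⟩ := hrow q l
      have h12 : θ (g q) r₁ = θ (g q) (g l) := by rw [hr₁, hθfinal q l]
      rcases symPairEq hθsym hθdist h12 with ⟨-, h2⟩ | ⟨h1, -⟩
      · rw [hw₁, h2]
      · exact absurd (ginj h1) hql
  have hπfinal : ∀ q, π' q = π (g q) := by
    intro q
    have h1 := hg3 q
    have h2 := hwfinal q q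
    have hk : π' q * p' q q ≠ 0 :=
      ne_of_gt (mul_pos (hπ' q).1 (hp' q q).1)
    rw [← h2] at h1
    exact (mul_right_cancel₀ hk h1).symm
  have gbij : Function.Bijective g := Finite.injective_iff_bijective.mp ginj
  refine ⟨Equiv.ofBijective g gbij, fun q => hπfinal q, fun q l => ?_, fun q l => hθfinal q l⟩
  have h := hwfinal q l
  rw [hπfinal l] at h
  exact mul_left_cancel₀ (ne_of_gt (hπ (g l)).1) h
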